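/- Let Γ be a finite connected simple graph in which no vertex is a singleton twin. Then every minimal resolving set of Γ is a basis of Γ, i.e., every minimal resolving set has cardinality equal to the metric dimension β(Γ). -/

import Mathlib

open SimpleGraph

/-- `W` is a resolving set for the graph `Γ`: any two distinct vertices are
distinguished by their distance to some element of `W`. -/
def IsResolvingSet {V : Type*} (Γ : SimpleGraph V) (W : Set V) : Prop :=
  ∀ u v : V, u ≠ v → ∃ w ∈ W, Γ.dist u w ≠ Γ.dist v w

/-- The metric dimension of a graph: the least cardinality of a resolving set. -/
noncomputable def metricDim {V : Type*} (Γ : SimpleGraph V) : ℕ :=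
  sInf {n | ∃ W : Set V, W.Finite ∧ W.ncard = n ∧ IsResolvingSet Γ W}

/-- A minimal resolving set: a resolving set no proper subset of which resolves. -/
def IsMinimalResolvingSet {V : Type*} (Γ : SimpleGraph V) (W : Set V) : Prop :=
  IsResolvingSet Γ W ∧ ∀ W' : Set V, W' ⊂ W → ¬ IsResolvingSet Γ W'

/-- Two vertices are twins if they have the same open neighborhood or the same
closed neighborhood. -/
def AreTwins {V : Type*} (Γ : SimpleGraph V) (u v : V) : Prop :=
  Γ.neighborSet u = Γ.neighborSet v ∨
    insert u (Γ.neighborSet u) = insert v (Γ.neighborSet v)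

/-- The twin class of a vertex. -/
def twinClass {V : Type*} (Γ : SimpleGraph V) (u : V) : Set V :=
  {v | AreTwins Γ u v}

/-- The number of twin classes of a graph. -/
noncomputable def twinClassCount {V : Type*} (Γ : SimpleGraph V) : ℕ :=
  {S : Set V | ∃ u : V, S = twinClass Γ u}.ncard

/-- Resolving sets of `Γ` have the exchange property. -/
def HasExchangeProperty {V : Type*} (Γ : SimpleGraph V) : Prop :=
  ∀ W₁ W₂ : Set V, IsMinimalResolvingSet Γ W₁ → IsMinimalResolvingSet Γ W₂ →
    ∀ u ∈ W₁, ∃ v ∈ W₂, IsMinimalResolvingSet Γ ((W₁ \ {u}) ∪ {v})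

/-- The (undirected) power graph of a group `G`: distinct `x`, `y` are adjacent
iff one is a positive power of the other. -/
def powerGraph (G : Type*) [Group G] : SimpleGraph G :=
  SimpleGraph.fromRel (fun x y => ∃ m : ℕ, 0 < m ∧ y = x ^ m)

/-- `R{x,y}`: the set of vertices having different distances to `x` and `y`. -/
def Rset {V : Type*} (Γ : SimpleGraph V) (x y : V) : Set V :=
  {z | Γ.dist x z ≠ Γ.dist y z}

section Aux
variable {V : Type*} {Γ : SimpleGraph V}

lemma areTwins_refl (u : V) : AreTwins Γ u u := Or.inl rfl

lemma areTwins_symm {u v : V} (h : AreTwins Γ u v) : AreTwins Γ v u := by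
  rcases h with h | h
  · exact Or.inl h.symm
  · exact Or.inr h.symm

lemma areTwins_trans {a b c : V} (h1 : AreTwins Γ a b) (h2 : AreTwins Γ b c) :
    AreTwins Γ a c := by
  by_cases hab : a = b
  · subst hab; exact h2
  by_cases hbc : b = c
  · subst hbc; exact h1
  rcases h1 with h1 | h1 <;> rcases h2 with h2 | h2
  · exact Or.inl (h1.trans h2)
  · -- N(a) = N(b), N[b] = N[c] : contradiction
    exfalso
    have hb : b ∈ insert c (Γ.neighborSet c) := h2 ▸ Set.mem_insert b _
    rw [Set.mem_insert_iff] at hb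
    have hbc' : Γ.Adj c b := by
      rcases hb with rfl | hb
      · exact absurd rfl hbc
      · exact hb
    have hcb : c ∈ Γ.neighborSet a := h1 ▸ hbc'.symm
    have ha : a ∈ insert b (Γ.neighborSet b) := by
      have : a ∈ insert c (Γ.neighborSet c) := Set.mem_insert_of_mem _ hcb.symm
      rw [← h2] at this; exact this
    rw [Set.mem_insert_iff] at ha
    rcases ha with rfl | ha
    · exact hab rfl
    · rw [← h1] at ha; exact Γ.irrefl ha
  · -- N[a] = N[b], N(b) = N(c) : contradiction
    exfalso
    have ha : a ∈ insert b (Γ.neighborSet b) := h1 ▸ Set.mem_insert a _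
    rw [Set.mem_insert_iff] at ha
    have hab' : Γ.Adj b a := by
      rcases ha with rfl | ha
      · exact absurd rfl hab
      · exact ha
    have hca : Γ.Adj c a := by
      have : a ∈ Γ.neighborSet c := h2 ▸ (hab' : a ∈ Γ.neighborSet b)
      exact this
    have hc : c ∈ insert b (Γ.neighborSet b) := by
      rw [← h1]; exact Set.mem_insert_of_mem _ hca.symm
    rw [Set.mem_insert_iff] at hc
    rcases hc with rfl | hc
    · exact hbc rfl
    · rw [h2] at hc; exact Γ.irrefl hc
  · exact Or.inr (h1.trans h2)

lemma dist_le_of_twin (hconn : Γ.Connected) {a b x : V}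
    (h : AreTwins Γ a b) (hxa : x ≠ a) (hxb : x ≠ b) :
    Γ.dist b x ≤ Γ.dist a x := by
  obtain ⟨p, hp⟩ := hconn.exists_walk_length_eq_dist a x
  obtain ⟨w, hadj, q, rfl⟩ := SimpleGraph.Walk.exists_eq_cons_of_ne (Ne.symm hxa) p
  rw [SimpleGraph.Walk.length_cons] at hp
  rcases h with h | h
  · have hbw : Γ.Adj b w := (h ▸ hadj : w ∈ Γ.neighborSet b)
    calc Γ.dist b x ≤ (SimpleGraph.Walk.cons hbw q).length := SimpleGraph.dist_le _
    _ = Γ.dist a x := by rw [SimpleGraph.Walk.length_cons, hp]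
  · have hw : w ∈ insert b (Γ.neighborSet b) := by
      rw [← h]; exact Set.mem_insert_of_mem _ hadj
    rw [Set.mem_insert_iff] at hw
    rcases hw with rfl | hbw
    · calc Γ.dist w x ≤ q.length := SimpleGraph.dist_le q
      _ ≤ q.length + 1 := Nat.le_succ _
      _ = Γ.dist a x := hp
    · calc Γ.dist b x ≤ (SimpleGraph.Walk.cons hbw q).length := SimpleGraph.dist_le _
      _ = Γ.dist a x := hp

lemma dist_eq_of_twin (hconn : Γ.Connected) {a b x : V}
    (h : AreTwins Γ a b) (hxa : x ≠ a) (hxb : x ≠ b) :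
    Γ.dist a x = Γ.dist b x :=
  le_antisymm (dist_le_of_twin hconn (areTwins_symm h) hxb hxa)
    (dist_le_of_twin hconn h hxa hxb)

lemma exists_distinguisher (hconn : Γ.Connected) {u v : V} (huv : u ≠ v)
    (hnt : ¬ AreTwins Γ u v) :
    ∃ z, z ≠ u ∧ z ≠ v ∧ Γ.dist u z ≠ Γ.dist v z := by
  by_contra hc
  push_neg at hc
  apply hnt
  have key : ∀ z, z ≠ u → z ≠ v → (Γ.Adj u z ↔ Γ.Adj v z) := by
    intro z hzu hzv
    rw [← SimpleGraph.dist_eq_one_iff_adj, ← SimpleGraph.dist_eq_one_iff_adj,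
      hc z hzu hzv]
  by_cases hadj : Γ.Adj u v
  · right
    ext z
    simp only [Set.mem_insert_iff, SimpleGraph.mem_neighborSet]
    by_cases hzu : z = u
    · subst hzu; simp [hadj.symm]
    by_cases hzv : z = v
    · subst hzv; simp [hadj]
    · simp [hzu, hzv, key z hzu hzv]
  · left
    ext z
    simp only [SimpleGraph.mem_neighborSet]
    by_cases hzu : z = u
    · subst hzu
      simp only [SimpleGraph.irrefl, false_iff]
      exact fun h => hadj h.symm
    by_cases hzv : z = v
    · subst hzv
      simp only [SimpleGraph.irrefl, iff_false]
      exact hadj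
    · exact key z hzu hzv

end Aux

section Main
variable {V : Type*} {Γ : SimpleGraph V}

lemma exists_other_twin (hns : ∀ u : V, twinClass Γ u ≠ {u}) (z : V) :
    ∃ b, AreTwins Γ z b ∧ b ≠ z := by
  by_contra hb
  push_neg at hb
  refine hns z (Set.eq_singleton_iff_unique_mem.mpr ⟨areTwins_refl z, fun b hbmem => ?_⟩)
  by_cases h : b = z
  · exact h
  · exact absurd h (not_not.mpr (hb b hbmem))

lemma resolving_iff (hconn : Γ.Connected) (hns : ∀ u : V, twinClass Γ u ≠ {u})
    (W : Set V) :
    IsResolvingSet Γ W ↔ ∀ a b : V, a ≠ b → AreTwins Γ a b → a ∈ W ∨ b ∈ W := by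
  constructor
  · intro hres a b hab htw
    by_contra hc
    push_neg at hc
    obtain ⟨w, hwW, hw⟩ := hres a b hab
    exact hw (dist_eq_of_twin hconn htw
      (fun h => hc.1 (h ▸ hwW)) (fun h => hc.2 (h ▸ hwW)))
  · intro hhit u v huv
    by_cases huW : u ∈ W
    · exact ⟨u, huW, by
        rw [SimpleGraph.dist_self]
        exact (hconn.pos_dist_of_ne (Ne.symm huv)).ne⟩
    by_cases hvW : v ∈ W
    · exact ⟨v, hvW, by
        rw [SimpleGraph.dist_self]
        exact (hconn.pos_dist_of_ne huv).ne'⟩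
    by_cases htw : AreTwins Γ u v
    · rcases hhit u v huv htw with h | h
      · exact absurd h huW
      · exact absurd h hvW
    obtain ⟨z, hzu, hzv, hz⟩ := exists_distinguisher hconn huv htw
    by_cases hzW : z ∈ W
    · exact ⟨z, hzW, hz⟩
    obtain ⟨b, hztw, hbz⟩ := exists_other_twin hns z
    have hbW : b ∈ W := by
      rcases hhit z b (Ne.symm hbz) hztw with h | h
      · exact absurd h hzW
      · exact h
    have hbu : u ≠ b := fun h => huW (h ▸ hbW)
    have hbv : v ≠ b := fun h => hvW (h ▸ hbW)
    refine ⟨b, hbW, ?_⟩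
    have h1 : Γ.dist u b = Γ.dist u z := by
      calc Γ.dist u b = Γ.dist b u := SimpleGraph.dist_comm
        _ = Γ.dist z u := (dist_eq_of_twin hconn hztw (Ne.symm hzu) hbu).symm
        _ = Γ.dist u z := SimpleGraph.dist_comm
    have h2 : Γ.dist v b = Γ.dist v z := by
      calc Γ.dist v b = Γ.dist b v := SimpleGraph.dist_comm
        _ = Γ.dist z v := (dist_eq_of_twin hconn hztw (Ne.symm hzv) hbv).symm
        _ = Γ.dist v z := SimpleGraph.dist_comm
    rw [h1, h2]
    exact hz

/-- A minimal resolving set misses exactly one vertex from each twin class. -/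
lemma minimal_unique_missing (hconn : Γ.Connected)
    (hns : ∀ u : V, twinClass Γ u ≠ {u}) {W : Set V}
    (hW : IsMinimalResolvingSet Γ W) (u : V) :
    ∃! x, x ∉ W ∧ AreTwins Γ u x := by
  have hhit := (resolving_iff hconn hns W).mp hW.1
  have hex : ∃ x, x ∉ W ∧ AreTwins Γ u x := by
    by_contra hc
    have hc' : ∀ x, AreTwins Γ u x → x ∈ W := by
      intro x hx; by_contra hn; exact hc ⟨x, hn, hx⟩
    -- every twin of u is in W; then W \ {u} still resolves
    have huW : u ∈ W := hc' u (areTwins_refl u)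
    have hres' : IsResolvingSet Γ (W \ {u}) := by
      rw [resolving_iff hconn hns]
      intro a b hab htw
      rcases hhit a b hab htw with h | h
      · by_cases hau : a = u
        · subst hau
          have : b ∈ W := hc' b htw
          exact Or.inr ⟨this, fun hbu => hab (Set.mem_singleton_iff.mp hbu).symm⟩
        · exact Or.inl ⟨h, fun h' => hau (Set.mem_singleton_iff.mp h')⟩
      · by_cases hbu : b = u
        · subst hbu
          have : a ∈ W := hc' a (areTwins_symm htw)
          exact Or.inl ⟨this, fun hau => hab (Set.mem_singleton_iff.mp hau)⟩
        · exact Or.inr ⟨h, fun h' => hbu (Set.mem_singleton_iff.mp h')⟩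
    exact hW.2 (W \ {u}) (Set.sdiff_singleton_ssubset.mpr huW) hres'
  obtain ⟨x, hx⟩ := hex
  refine ⟨x, hx, fun y hy => ?_⟩
  by_contra hyx
  have htw : AreTwins Γ y x := areTwins_trans (areTwins_symm hy.2) hx.2
  rcases hhit y x hyx htw with h | h
  · exact hy.1 h
  · exact hx.1 h

end Main

section Card
variable {V : Type*} {Γ : SimpleGraph V}

lemma minimal_ncard_eq [Fintype V] (hconn : Γ.Connected)
    (hns : ∀ u : V, twinClass Γ u ≠ {u}) {W₁ W₂ : Set V}
    (h1 : IsMinimalResolvingSet Γ W₁) (h2 : IsMinimalResolvingSet Γ W₂) :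
    W₁.ncard = W₂.ncard := by
  classical
  have hf := fun u : V => (minimal_unique_missing hconn hns h2 u).choose_spec
  have hg := fun u : V => (minimal_unique_missing hconn hns h1 u).choose_spec
  set f : V → V := fun u => (minimal_unique_missing hconn hns h2 u).choose with hfdef
  set g : V → V := fun u => (minimal_unique_missing hconn hns h1 u).choose with hgdef
  have hfg : ∀ u, u ∉ W₁ → g (f u) = u := by
    intro u hu
    exact ((hg (f u)).2 u ⟨hu, areTwins_symm (hf u).1.2⟩).symm
  have hgf : ∀ u, u ∉ W₂ → f (g u) = u := by
    intro u hu
    exact ((hf (g u)).2 u ⟨hu, areTwins_symm (hg u).1.2⟩).symm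
  have e : ↥(W₁ᶜ) ≃ ↥(W₂ᶜ) :=
    { toFun := fun x => ⟨f x, (hf x).1.1⟩
      invFun := fun y => ⟨g y, (hg y).1.1⟩
      left_inv := fun x => Subtype.ext (hfg x x.2)
      right_inv := fun y => Subtype.ext (hgf y y.2) }
  have hcard : (W₁ᶜ).ncard = (W₂ᶜ).ncard := by
    rw [← Nat.card_coe_set_eq, ← Nat.card_coe_set_eq]
    exact Nat.card_congr e
  have t1 := Set.ncard_add_ncard_compl W₁
  have t2 := Set.ncard_add_ncard_compl W₂
  omega

lemma exists_minimal_subset [Fintype V] :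
    ∀ (n : ℕ) (W : Set V), W.ncard = n → IsResolvingSet Γ W →
      ∃ W', W' ⊆ W ∧ IsMinimalResolvingSet Γ W' := by
  intro n
  induction n using Nat.strong_induction_on with
  | _ n ih =>
    intro W hcard hW
    by_cases h : ∀ W' : Set V, W' ⊂ W → ¬ IsResolvingSet Γ W'
    · exact ⟨W, subset_rfl, hW, h⟩
    · push_neg at h
      obtain ⟨W', hss, hres⟩ := h
      obtain ⟨W'', hsub, hmin⟩ :=
        ih W'.ncard (hcard ▸ Set.ncard_lt_ncard hss (Set.toFinite W)) W' rfl hres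
      exact ⟨W'', hsub.trans hss.subset, hmin⟩

end Card

/-- In a finite connected graph with no singleton twin, every
minimal resolving set is a basis, i.e. has cardinality the metric dimension. -/
theorem minimal_resolving_is_basis_of_no_singleton_twin
    {V : Type*} [Fintype V] (Γ : SimpleGraph V) (hconn : Γ.Connected)
    (hns : ∀ u : V, twinClass Γ u ≠ {u})
    (W : Set V) (hW : IsMinimalResolvingSet Γ W) :
    W.ncard = metricDim Γ := by
  have hmem : W.ncard ∈ {n | ∃ W' : Set V, W'.Finite ∧ W'.ncard = n ∧ IsResolvingSet Γ W'} :=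
    ⟨W, Set.toFinite W, rfl, hW.1⟩
  refine le_antisymm ?_ (Nat.sInf_le hmem)
  refine le_csInf ⟨W.ncard, hmem⟩ ?_
  rintro n ⟨W', hfin, rfl, hres⟩
  obtain ⟨W'', hsub, hmin⟩ := exists_minimal_subset W'.ncard W' rfl hres
  calc W.ncard = W''.ncard := minimal_ncard_eq hconn hns hW hmin
    _ ≤ W'.ncard := Set.ncard_le_ncard hsub (Set.toFinite W')
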